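/- Let X be a normal space of covering dimension at most n and let n < q ≤ p. Let U ⊆ ℝ^p be open, f : X → U continuous, ε : X → ℝ_{>0} continuous, and Z = U ∩ (ℝ^{p−q} × {0}). Then there exists a continuous g : X → U such that for all x ∈ X, ‖f(x) − g(x)‖ < ε(x) and g(x) ∉ ℝ^{p−q} × {0}. -/

import Mathlib

open MeasureTheory in
lemma avoid_finite_submodules {p : ℕ} (c : EuclideanSpace ℝ (Fin p)) {δ : ℝ} (hδ : 0 < δ)
    (𝒮 : Finset (Submodule ℝ (EuclideanSpace ℝ (Fin p)))) (h : ∀ M ∈ 𝒮, M ≠ ⊤) :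
    ∃ v ∈ Metric.ball c δ, ∀ M ∈ 𝒮, v ∉ M := by
  by_contra hcon
  push_neg at hcon
  have hsub : Metric.ball c δ ⊆ ⋃ M ∈ (𝒮 : Set (Submodule ℝ (EuclideanSpace ℝ (Fin p)))),
      (M : Set (EuclideanSpace ℝ (Fin p))) := by
    intro v hv
    obtain ⟨M, hM, hvM⟩ := hcon v hv
    exact Set.mem_biUnion hM hvM
  have h0 : volume (⋃ M ∈ (𝒮 : Set (Submodule ℝ (EuclideanSpace ℝ (Fin p)))),
      (M : Set (EuclideanSpace ℝ (Fin p)))) = 0 := by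
    rw [measure_biUnion_null_iff 𝒮.countable_toSet]
    intro M hM
    exact Measure.addHaar_submodule volume M (h M hM)
  have hle := (measure_mono hsub).trans_eq h0
  exact absurd (le_antisymm hle bot_le) (Metric.measure_ball_pos volume c hδ).ne'


noncomputable def lastZeroSubmodule (p q : ℕ) : Submodule ℝ (EuclideanSpace ℝ (Fin p)) where
  carrier := {v | ∀ i : Fin p, p - q ≤ (i : ℕ) → v i = 0}
  add_mem' := by
    intro a b ha hb i hi
    have : (a + b) i = a i + b i := rfl
    rw [this, ha i hi, hb i hi, add_zero]
  zero_mem' := by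
    intro i _
    rfl
  smul_mem' := by
    intro c a ha i hi
    have : (c • a) i = c * a i := rfl
    rw [this, ha i hi, mul_zero]

lemma lastZero_finrank_le (p q : ℕ) (hqp : q ≤ p) :
    Module.finrank ℝ (lastZeroSubmodule p q) ≤ p - q := by
  classical
  set B : Finset (EuclideanSpace ℝ (Fin p)) :=
    (Finset.univ.filter fun i : Fin p => (i : ℕ) < p - q).image
      (fun i => EuclideanSpace.single i (1 : ℝ)) with hB
  have hle : lastZeroSubmodule p q ≤ Submodule.span ℝ (B : Set (EuclideanSpace ℝ (Fin p))) := by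
    intro v hv
    have hv' : ∀ i : Fin p, p - q ≤ (i : ℕ) → v i = 0 := hv
    have hdecomp : v = ∑ i : Fin p, v i • EuclideanSpace.single i (1 : ℝ) := by
      ext j
      have happ : (∑ i : Fin p, v i • EuclideanSpace.single i (1 : ℝ)) j
          = ∑ i : Fin p, (v i • EuclideanSpace.single i (1 : ℝ)) j := by
        rw [WithLp.ofLp_sum]
        exact Finset.sum_apply _ _ _
      rw [happ]
      simp [EuclideanSpace.single_apply]
    rw [hdecomp]
    refine Submodule.sum_mem _ fun i _ => ?_
    by_cases hi : (i : ℕ) < p - q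
    · exact Submodule.smul_mem _ _ (Submodule.subset_span
        (Finset.mem_coe.2 (Finset.mem_image.2 ⟨i, Finset.mem_filter.2 ⟨Finset.mem_univ _, hi⟩, rfl⟩)))
    · rw [hv' i (by omega), zero_smul]
      exact Submodule.zero_mem _
  have hcard : B.card ≤ p - q := by
    refine le_trans Finset.card_image_le ?_
    have := Finset.card_le_card_of_injOn (f := fun i : Fin p => (i : ℕ))
      (s := Finset.univ.filter fun i : Fin p => (i : ℕ) < p - q)
      (t := Finset.range (p - q))
      (fun i hi => Finset.mem_range.2 (Finset.mem_filter.1 hi).2)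
      (Fin.val_injective.injOn)
    simpa using this
  calc Module.finrank ℝ (lastZeroSubmodule p q)
      ≤ Module.finrank ℝ (Submodule.span ℝ (B : Set (EuclideanSpace ℝ (Fin p)))) :=
        Submodule.finrank_mono hle
    _ ≤ B.card := finrank_span_finset_le_card B
    _ ≤ p - q := hcard

lemma lastZero_sup_proper (p q n : ℕ) (hnq : n < q) (hqp : q ≤ p)
    (T : Finset (EuclideanSpace ℝ (Fin p))) (hT : T.card ≤ n) :
    lastZeroSubmodule p q ⊔ Submodule.span ℝ (T : Set (EuclideanSpace ℝ (Fin p))) ≠ ⊤ := by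
  intro htop
  have h1 : Module.finrank ℝ (lastZeroSubmodule p q) ≤ p - q := lastZero_finrank_le p q hqp
  have h2 : Module.finrank ℝ (Submodule.span ℝ (T : Set (EuclideanSpace ℝ (Fin p)))) ≤ n :=
    le_trans (finrank_span_finset_le_card T) hT
  have h3 := Submodule.finrank_sup_add_finrank_inf_eq (lastZeroSubmodule p q)
    (Submodule.span ℝ (T : Set (EuclideanSpace ℝ (Fin p))))
  rw [htop] at h3
  have h4 : Module.finrank ℝ (⊤ : Submodule ℝ (EuclideanSpace ℝ (Fin p))) = p := by
    rw [finrank_top, finrank_euclideanSpace_fin]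
  omega



lemma exists_generic_seq {p n : ℕ} (SM : Submodule ℝ (EuclideanSpace ℝ (Fin p)))
    (hSM : ∀ T : Finset (EuclideanSpace ℝ (Fin p)), T.card ≤ n →
      SM ⊔ Submodule.span ℝ (T : Set (EuclideanSpace ℝ (Fin p))) ≠ ⊤)
    (y : ℕ → EuclideanSpace ℝ (Fin p)) (r : ℕ → ℝ) (hr : ∀ k, 0 < r k) :
    ∃ w : ℕ → EuclideanSpace ℝ (Fin p), (∀ k, w k ∈ Metric.ball (y k) (r k)) ∧
      ∀ k (T : Finset ℕ), T ⊆ Finset.range k → T.card ≤ n →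
        w k ∉ SM ⊔ Submodule.span ℝ (w '' (T : Set ℕ)) := by
  classical
  have key : ∀ (prev : ℕ → EuclideanSpace ℝ (Fin p)) (T : Finset ℕ), T.card ≤ n →
      SM ⊔ Submodule.span ℝ (prev '' (T : Set ℕ)) ≠ ⊤ := by
    intro prev T hTc
    have : prev '' (T : Set ℕ) = ((T.image prev : Finset (EuclideanSpace ℝ (Fin p))) :
        Set (EuclideanSpace ℝ (Fin p))) := by simp [Finset.coe_image]
    rw [this]
    exact hSM _ (le_trans (Finset.card_image_le) hTc)
  let 𝒮 : (ℕ → EuclideanSpace ℝ (Fin p)) → ℕ → Finset (Submodule ℝ (EuclideanSpace ℝ (Fin p))) :=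
    fun prev k =>
    ((Finset.range k).powerset.filter fun T => T.card ≤ n).image
      (fun T : Finset ℕ => SM ⊔ Submodule.span ℝ (prev '' (T : Set ℕ)))
  have h𝒮 : ∀ prev k, ∀ M ∈ 𝒮 prev k, M ≠ ⊤ := by
    intro prev k M hM
    obtain ⟨T, hT, rfl⟩ := Finset.mem_image.1 hM
    exact key prev T (Finset.mem_filter.1 hT).2
  let pick : (ℕ → EuclideanSpace ℝ (Fin p)) → ℕ → EuclideanSpace ℝ (Fin p) := fun prev k =>
    (avoid_finite_submodules (y k) (hr k) (𝒮 prev k) (h𝒮 prev k)).choose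
  have hpick : ∀ prev k, pick prev k ∈ Metric.ball (y k) (r k) ∧
      ∀ M ∈ 𝒮 prev k, pick prev k ∉ M := by
    intro prev k
    obtain ⟨h1, h2⟩ := (avoid_finite_submodules (y k) (hr k) (𝒮 prev k) (h𝒮 prev k)).choose_spec
    exact ⟨h1, h2⟩
  let h : ℕ → (ℕ → EuclideanSpace ℝ (Fin p)) := fun k =>
    Nat.rec (fun _ => 0) (fun k ih => Function.update ih k (pick ih k)) k
  let w : ℕ → EuclideanSpace ℝ (Fin p) := fun k => h (k + 1) k
  have hstep : ∀ k, h (k + 1) = Function.update (h k) k (pick (h k) k) := fun k => rfl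
  have hagree : ∀ m k, k < m → h m k = w k := by
    intro m
    induction m with
    | zero => intro k hk; omega
    | succ m ih =>
      intro k hk
      rcases Nat.lt_succ_iff_lt_or_eq.1 hk with hk' | rfl
      · rw [hstep m, Function.update_of_ne (by omega)]
        exact ih k hk'
      · rfl
  have hwk : ∀ k, w k = pick (h k) k := by
    intro k
    show Function.update (h k) k (pick (h k) k) k = _
    rw [Function.update_self]
  have himg : ∀ k (T : Finset ℕ), T ⊆ Finset.range k →
      (h k) '' (T : Set ℕ) = w '' (T : Set ℕ) := by
    intro k T hT
    apply Set.image_congr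
    intro i hi
    exact hagree k i (Finset.mem_range.1 (hT (Finset.mem_coe.1 hi)))
  refine ⟨w, ?_, ?_⟩
  · intro k
    rw [hwk k]
    exact (hpick (h k) k).1
  · intro k T hT hTc
    rw [hwk k]
    have : SM ⊔ Submodule.span ℝ (w '' (T : Set ℕ)) ∈ 𝒮 (h k) k := by
      exact Finset.mem_image.2 ⟨T, Finset.mem_filter.2
        ⟨Finset.mem_powerset.2 hT, hTc⟩, by rw [himg k T hT]⟩
    exact (hpick (h k) k).2 _ this


lemma key_combo {p n : ℕ} (SM : Submodule ℝ (EuclideanSpace ℝ (Fin p)))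
    (w : ℕ → EuclideanSpace ℝ (Fin p))
    (hw : ∀ k (T : Finset ℕ), T ⊆ Finset.range k → T.card ≤ n →
        w k ∉ SM ⊔ Submodule.span ℝ (w '' (T : Set ℕ))) :
    ∀ (k : ℕ) (F : Finset ℕ), F ⊆ Finset.range k → F.card ≤ n + 1 → ∀ φ : ℕ → ℝ,
      (∑ j ∈ F, φ j • w j) ∈ SM → ∀ j ∈ F, φ j = 0 := by
  intro k
  induction k with
  | zero =>
    intro F hF _ φ _ j hj
    exact absurd (Finset.mem_range.1 (hF hj)) (by omega)
  | succ k ih =>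
    intro F hF hcard φ hsum j hj
    by_cases hkF : k ∈ F
    · have hF' : F.erase k ⊆ Finset.range k := by
        intro a ha
        obtain ⟨hne, haF⟩ := Finset.mem_erase.1 ha
        have := Finset.mem_range.1 (hF haF)
        exact Finset.mem_range.2 (by omega)
      have hcard' : (F.erase k).card ≤ n := by
        have := Finset.card_erase_of_mem hkF
        omega
      have hsplit : ∑ j ∈ F, φ j • w j = φ k • w k + ∑ j ∈ F.erase k, φ j • w j :=
        (Finset.add_sum_erase _ _ hkF).symm
      by_cases hφk : φ k = 0
      · have hsum' : (∑ j ∈ F.erase k, φ j • w j) ∈ SM := by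
          rw [hsplit, hφk, zero_smul, zero_add] at hsum
          exact hsum
        rcases eq_or_ne j k with rfl | hjk
        · exact hφk
        · exact ih (F.erase k) hF' (by omega) φ hsum' j (Finset.mem_erase.2 ⟨hjk, hj⟩)
      · exfalso
        apply hw k (F.erase k) hF' hcard'
        have hwk : w k = (φ k)⁻¹ • ((∑ j ∈ F, φ j • w j) - ∑ j ∈ F.erase k, φ j • w j) := by
          rw [hsplit, add_sub_cancel_right, smul_smul, inv_mul_cancel₀ hφk, one_smul]
        rw [hwk]
        refine Submodule.smul_mem _ _ (Submodule.sub_mem _ (Submodule.mem_sup_left hsum) ?_)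
        refine Submodule.mem_sup_right (Submodule.sum_mem _ fun i hi => ?_)
        exact Submodule.smul_mem _ _ (Submodule.subset_span ⟨i, Finset.mem_coe.2 hi, rfl⟩)
    · exact ih F (fun a ha => Finset.mem_range.2 (by
        have := Finset.mem_range.1 (hF ha)
        rcases Nat.lt_succ_iff_lt_or_eq.1 this with h | rfl
        · exact h
        · exact absurd ha hkF)) hcard φ hsum j hj

lemma continuous_tsum_locfin {α M : Type*} [TopologicalSpace α] [AddCommGroup M]
    [TopologicalSpace M] [IsTopologicalAddGroup M] [T2Space M]
    (g : ℕ → α → M) (hg : ∀ i, Continuous (g i))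
    (hlf : ∀ x : α, ∃ s ∈ nhds x, ∃ K : ℕ, ∀ z ∈ s, ∀ i, K ≤ i → g i z = 0) :
    Continuous fun x => ∑' i, g i x := by
  rw [continuous_iff_continuousAt]
  intro x
  obtain ⟨s, hs, K, hK⟩ := hlf x
  have heq : (fun z => ∑ i ∈ Finset.range K, g i z) =ᶠ[nhds x] fun z => ∑' i, g i z := by
    refine Filter.eventually_of_mem hs (fun z hz => ?_)
    exact (tsum_eq_sum (fun i hi => hK z hz i (by
      by_contra h
      exact hi (Finset.mem_range.2 (by omega))))).symm
  exact ContinuousAt.congr (Continuous.continuousAt (by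
    exact continuous_finset_sum _ (fun i _ => hg i))) heq

/-- Covering dimension at most `n`: every open cover has an open refinement in which
each point lies in at most `n + 1` members. -/
def CovDimLE (X : Type) [TopologicalSpace X] (n : ℕ) : Prop :=
  ∀ 𝒰 : Set (Set X), (∀ U ∈ 𝒰, IsOpen U) → ⋃₀ 𝒰 = Set.univ →
    ∃ 𝒱 : Set (Set X), (∀ V ∈ 𝒱, IsOpen V) ∧ ⋃₀ 𝒱 = Set.univ ∧
      (∀ V ∈ 𝒱, ∃ U ∈ 𝒰, V ⊆ U) ∧
      ∀ x : X, {V ∈ 𝒱 | x ∈ V}.Finite ∧ {V ∈ 𝒱 | x ∈ V}.ncard ≤ n + 1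

theorem stmt_13 (n q p : ℕ) (hnq : n < q) (hqp : q ≤ p)
    (X : Type) [TopologicalSpace X] [NormalSpace X] (hdim : CovDimLE X n)
    (U : Set (EuclideanSpace ℝ (Fin p))) (hU : IsOpen U)
    (S : Set (EuclideanSpace ℝ (Fin p)))
    (hS : S = {v : EuclideanSpace ℝ (Fin p) | ∀ i : Fin p, p - q ≤ (i : ℕ) → v i = 0})
    (f : X → EuclideanSpace ℝ (Fin p)) (hf : Continuous f) (hfU : ∀ x, f x ∈ U)
    (ε : X → ℝ) (hε : Continuous ε) (hεpos : ∀ x, 0 < ε x) :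
    ∃ g : X → EuclideanSpace ℝ (Fin p), Continuous g ∧
      ∀ x, g x ∈ U ∧ ‖f x - g x‖ < ε x ∧ g x ∉ S := by
  classical
  -- countable family of candidate balls
  let enc : ℕ → ℕ × ℕ := fun k => (Denumerable.eqv (ℕ × ℕ)).symm k
  let y : ℕ → EuclideanSpace ℝ (Fin p) :=
    fun k => TopologicalSpace.denseSeq (EuclideanSpace ℝ (Fin p)) (enc k).1
  let r : ℕ → ℝ := fun k => 1 / (((enc k).2 : ℝ) + 1)
  have hrpos : ∀ k, 0 < r k := fun k => by positivity
  let W : ℕ → Set X := fun k =>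
    if Metric.ball (y k) (5 * r k) ⊆ U then
      f ⁻¹' Metric.ball (y k) (r k) ∩ ε ⁻¹' Set.Ioi (8 * r k) else ∅
  have hWopen : ∀ k, IsOpen (W k) := by
    intro k
    by_cases h : Metric.ball (y k) (5 * r k) ⊆ U
    · simp only [W, if_pos h]
      exact (Metric.isOpen_ball.preimage hf).inter (isOpen_Ioi.preimage hε)
    · simp only [W, if_neg h]
      exact isOpen_empty
  have hWprop : ∀ k x, x ∈ W k →
      Metric.ball (y k) (5 * r k) ⊆ U ∧ dist (f x) (y k) < r k ∧ 8 * r k < ε x := by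
    intro k x hx
    by_cases h : Metric.ball (y k) (5 * r k) ⊆ U
    · simp only [W, if_pos h] at hx
      exact ⟨h, Metric.mem_ball.1 hx.1, hx.2⟩
    · simp only [W, if_neg h] at hx
      exact absurd hx (Set.notMem_empty x)
  have hWcover : ∀ x, ∃ k, x ∈ W k := by
    intro x
    obtain ⟨R, hR0, hRU⟩ := Metric.isOpen_iff.1 hU (f x) (hfU x)
    have hρ0 : 0 < min R (ε x) := lt_min hR0 (hεpos x)
    obtain ⟨m, hm⟩ := exists_nat_one_div_lt (show (0:ℝ) < min R (ε x) / 8 by linarith)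
    have hr0 : (0:ℝ) < 1 / ((m : ℝ) + 1) := by positivity
    obtain ⟨a, ha⟩ := (TopologicalSpace.denseRange_denseSeq
      (EuclideanSpace ℝ (Fin p))).exists_dist_lt (f x) hr0
    refine ⟨Denumerable.eqv (ℕ × ℕ) (a, m), ?_⟩
    have henc : enc (Denumerable.eqv (ℕ × ℕ) (a, m)) = (a, m) := Equiv.symm_apply_apply _ _
    have hy : y (Denumerable.eqv (ℕ × ℕ) (a, m))
        = TopologicalSpace.denseSeq (EuclideanSpace ℝ (Fin p)) a := by
      simp only [y, henc]
    have hrk : r (Denumerable.eqv (ℕ × ℕ) (a, m)) = 1 / ((m : ℝ) + 1) := by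
      simp only [r, henc]
    have hcond : Metric.ball (y (Denumerable.eqv (ℕ × ℕ) (a, m)))
        (5 * r (Denumerable.eqv (ℕ × ℕ) (a, m))) ⊆ U := by
      rw [hy, hrk]
      intro z hz
      rw [Metric.mem_ball] at hz
      apply hRU
      rw [Metric.mem_ball]
      calc dist z (f x) ≤ dist z (TopologicalSpace.denseSeq (EuclideanSpace ℝ (Fin p)) a)
            + dist (TopologicalSpace.denseSeq (EuclideanSpace ℝ (Fin p)) a) (f x) :=
          dist_triangle _ _ _
        _ < 5 * (1 / ((m : ℝ) + 1)) + 1 / ((m : ℝ) + 1) := by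
            rw [dist_comm] at ha; linarith
        _ < R := by
            have h8 : 8 * (1 / ((m : ℝ) + 1)) < min R (ε x) := by linarith
            have : min R (ε x) ≤ R := min_le_left _ _
            linarith [hr0]
    simp only [W, if_pos hcond]
    constructor
    · rw [Set.mem_preimage, hy, hrk, Metric.mem_ball]
      exact ha
    · rw [Set.mem_preimage, hrk, Set.mem_Ioi]
      have h8 : 8 * (1 / ((m : ℝ) + 1)) < min R (ε x) := by linarith
      have : min R (ε x) ≤ ε x := min_le_right _ _
      linarith
  -- apply covering dimension
  obtain ⟨𝒱, h𝒱o, h𝒱cov, h𝒱ref, h𝒱fin⟩ := hdim (Set.range W)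
    (by rintro _ ⟨k, rfl⟩; exact hWopen k)
    (by
      apply Set.eq_univ_of_forall
      intro x
      obtain ⟨k, hk⟩ := hWcover x
      exact ⟨W k, Set.mem_range_self k, hk⟩)
  have hsel : ∀ V, V ∈ 𝒱 → ∃ k, V ⊆ W k := by
    intro V hV
    obtain ⟨u, hu, hVu⟩ := h𝒱ref V hV
    obtain ⟨k, rfl⟩ := hu
    exact ⟨k, hVu⟩
  let jsel : Set X → ℕ := fun V => if h : ∃ k, V ⊆ W k then h.choose else 0
  have hjsel : ∀ V ∈ 𝒱, V ⊆ W (jsel V) := by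
    intro V hV
    have h := hsel V hV
    simp only [jsel, dif_pos h]
    exact h.choose_spec
  let A : ℕ → Set X := fun k => ⋃₀ {V | V ∈ 𝒱 ∧ jsel V = k}
  have hAopen : ∀ k, IsOpen (A k) := fun k => isOpen_sUnion (fun V hV => h𝒱o V hV.1)
  have hAW : ∀ k, A k ⊆ W k := by
    rintro k x ⟨V, ⟨hV, rfl⟩, hxV⟩
    exact hjsel V hV hxV
  have hAcover : ∀ x : X, ∃ k, x ∈ A k := by
    intro x
    have hx : x ∈ ⋃₀ 𝒱 := h𝒱cov ▸ Set.mem_univ x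
    obtain ⟨V, hV, hxV⟩ := hx
    exact ⟨jsel V, ⟨V, ⟨hV, rfl⟩, hxV⟩⟩
  have hAfin : ∀ x : X, {k | x ∈ A k}.Finite ∧ {k | x ∈ A k}.ncard ≤ n + 1 := by
    intro x
    have hsub : {k | x ∈ A k} ⊆ jsel '' {V | V ∈ 𝒱 ∧ x ∈ V} := by
      rintro k ⟨V, ⟨hV, rfl⟩, hxV⟩
      exact ⟨V, ⟨hV, hxV⟩, rfl⟩
    obtain ⟨hfin, hcard⟩ := h𝒱fin x
    refine ⟨(hfin.image jsel).subset hsub, ?_⟩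
    calc {k | x ∈ A k}.ncard ≤ (jsel '' {V | V ∈ 𝒱 ∧ x ∈ V}).ncard :=
        Set.ncard_le_ncard hsub (hfin.image jsel)
      _ ≤ {V | V ∈ 𝒱 ∧ x ∈ V}.ncard := Set.ncard_image_le hfin
      _ ≤ n + 1 := hcard
  -- shrink the cover
  obtain ⟨v, hvcov, hvopen, hvcl⟩ := exists_subset_iUnion_closure_subset isClosed_univ hAopen
    (fun x _ => (hAfin x).1)
    (by
      intro x _
      obtain ⟨k, hk⟩ := hAcover x
      exact Set.mem_iUnion.2 ⟨k, hk⟩)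
  -- Urysohn functions
  have hury : ∀ k, ∃ φ : C(X, ℝ), Set.EqOn φ 0 (A k)ᶜ ∧ Set.EqOn φ 1 (closure (v k)) ∧
      ∀ x, φ x ∈ Set.Icc (0:ℝ) 1 := by
    intro k
    exact exists_continuous_zero_one_of_isClosed (isClosed_compl_iff.2 (hAopen k))
      isClosed_closure (Set.disjoint_left.2 fun a ha hb => ha (hvcl k hb))
  choose φ hφ0 hφ1 hφmem using hury
  have hφ0le : ∀ k x, 0 ≤ φ k x := fun k x => (hφmem k x).1
  have hφle1 : ∀ k x, φ k x ≤ 1 := fun k x => (hφmem k x).2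
  -- the locally finite bump functions
  let σ : ℕ → X → ℝ := fun k x => ∑ m ∈ Finset.range k, φ m x
  let gf : ℕ → X → ℝ := fun k x => max (φ k x - (k : ℝ) * σ k x) 0
  have hσ0 : ∀ k x, 0 ≤ σ k x := fun k x => Finset.sum_nonneg fun m _ => hφ0le m x
  have hgcont : ∀ k, Continuous (gf k) := fun k =>
    (((φ k).continuous.sub (continuous_const.mul
      (continuous_finset_sum _ fun m _ => (φ m).continuous))).max continuous_const)
  have hgnn : ∀ k x, 0 ≤ gf k x := fun k x => le_max_right _ _
  have hgsupp : ∀ k x, gf k x ≠ 0 → x ∈ A k := by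
    intro k x hne
    by_contra hx
    apply hne
    have h0 : φ k x = 0 := by simpa using hφ0 k (Set.mem_compl hx)
    show max (φ k x - (k : ℝ) * σ k x) 0 = 0
    apply max_eq_right
    have h1 := hσ0 k x
    have h2 : (0:ℝ) ≤ (k : ℝ) := Nat.cast_nonneg k
    nlinarith
  have hvφ : ∀ k x, x ∈ v k → φ k x = 1 := by
    intro k x hx
    simpa using hφ1 k (subset_closure hx)
  have hexφ : ∀ x : X, ∃ i, 0 < φ i x := by
    intro x
    obtain ⟨i, hi⟩ := Set.mem_iUnion.1 (hvcov (Set.mem_univ x))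
    exact ⟨i, by rw [hvφ i x hi]; norm_num⟩
  have hgpos : ∀ x : X, ∃ k, 0 < gf k x := by
    intro x
    have h := hexφ x
    refine ⟨Nat.find h, ?_⟩
    have hk : 0 < φ (Nat.find h) x := Nat.find_spec h
    have hσz : σ (Nat.find h) x = 0 := Finset.sum_eq_zero (fun m hm =>
      le_antisymm (not_lt.1 (Nat.find_min h (Finset.mem_range.1 hm))) (hφ0le m x))
    show 0 < max (φ (Nat.find h) x - (Nat.find h : ℝ) * σ (Nat.find h) x) 0
    rw [hσz, mul_zero, sub_zero]
    exact lt_max_of_lt_left hk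
  have hloc : ∀ x : X, ∃ s ∈ nhds x, ∃ K : ℕ, ∀ z ∈ s, ∀ i, K ≤ i → gf i z = 0 := by
    intro x
    obtain ⟨i0, hi0⟩ := Set.mem_iUnion.1 (hvcov (Set.mem_univ x))
    refine ⟨{z | 1/2 < φ i0 z}, ?_, max (i0 + 1) 2, ?_⟩
    · refine (isOpen_lt continuous_const (φ i0).continuous).mem_nhds ?_
      show (1:ℝ)/2 < φ i0 x
      rw [hvφ i0 x hi0]
      norm_num
    · intro z hz i hi
      have hi0lt : i0 < i := by omega
      have h2 : (2:ℝ) ≤ (i : ℝ) := by exact_mod_cast (show 2 ≤ i by omega)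
      have hσge : 1/2 < σ i z :=
        lt_of_lt_of_le hz (Finset.single_le_sum (fun m _ => hφ0le m z)
          (Finset.mem_range.2 hi0lt))
      show max (φ i z - (i : ℝ) * σ i z) 0 = 0
      apply max_eq_right
      nlinarith [hφle1 i z, hσ0 i z]
  -- generic points
  obtain ⟨w, hwball, hwgen⟩ := exists_generic_seq (lastZeroSubmodule p q)
    (fun T hT => lastZero_sup_proper p q n hnq hqp T hT) y r hrpos
  have hkey := key_combo (lastZeroSubmodule p q) w hwgen
  -- the map
  let G : X → ℝ := fun x => ∑' i, gf i x
  let Nv : X → EuclideanSpace ℝ (Fin p) := fun x => ∑' i, gf i x • w i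
  let g : X → EuclideanSpace ℝ (Fin p) := fun x => (G x)⁻¹ • Nv x
  have hGcont : Continuous G := continuous_tsum_locfin gf hgcont hloc
  have hNvcont : Continuous Nv := continuous_tsum_locfin (fun i x => gf i x • w i)
    (fun i => (hgcont i).smul continuous_const)
    (by
      intro x
      obtain ⟨s, hs, K, hK⟩ := hloc x
      exact ⟨s, hs, K, fun z hz i hi => by show gf i z • w i = 0; rw [hK z hz i hi, zero_smul]⟩)
  have hpoint : ∀ x : X, ∃ T : Finset ℕ, ∃ K : ℕ, T ⊆ Finset.range K ∧ T.Nonempty ∧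
      (∀ i ∈ T, 0 < gf i x) ∧ (∀ i ∈ T, x ∈ A i) ∧ T.card ≤ n + 1 ∧
      G x = ∑ i ∈ T, gf i x ∧ Nv x = ∑ i ∈ T, gf i x • w i := by
    intro x
    obtain ⟨s, hs, K, hK⟩ := hloc x
    have hxs : x ∈ s := mem_of_mem_nhds hs
    refine ⟨(Finset.range K).filter (fun i => gf i x ≠ 0), K, Finset.filter_subset _ _,
      ?_, ?_, ?_, ?_, ?_, ?_⟩
    · obtain ⟨k, hk⟩ := hgpos x
      refine ⟨k, Finset.mem_filter.2 ⟨Finset.mem_range.2 ?_, hk.ne'⟩⟩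
      by_contra h
      exact hk.ne' (hK x hxs k (by omega))
    · exact fun i hi => lt_of_le_of_ne (hgnn i x) (Ne.symm (Finset.mem_filter.1 hi).2)
    · exact fun i hi => hgsupp i x (Finset.mem_filter.1 hi).2
    · have hsub : (((Finset.range K).filter (fun i => gf i x ≠ 0)) : Set ℕ) ⊆ {k | x ∈ A k} :=
        fun i hi => hgsupp i x (Finset.mem_filter.1 hi).2
      have h1 := Set.ncard_le_ncard hsub (hAfin x).1
      rw [Set.ncard_coe_finset] at h1
      exact le_trans h1 (hAfin x).2
    · show (∑' i, gf i x) = _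
      rw [tsum_eq_sum (s := Finset.range K)
        (fun i hi => hK x hxs i (le_of_not_gt (fun h => hi (Finset.mem_range.2 h))))]
      refine (Finset.sum_subset (Finset.filter_subset _ _) ?_).symm
      intro i hiK hiT
      by_contra h
      exact hiT (Finset.mem_filter.2 ⟨hiK, h⟩)
    · show (∑' i, gf i x • w i) = _
      rw [tsum_eq_sum (s := Finset.range K)
        (fun i hi => by
          rw [hK x hxs i (le_of_not_gt (fun h => hi (Finset.mem_range.2 h))), zero_smul])]
      refine (Finset.sum_subset (Finset.filter_subset _ _) ?_).symm
      intro i hiK hiT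
      have h0 : gf i x = 0 := by
        by_contra h
        exact hiT (Finset.mem_filter.2 ⟨hiK, h⟩)
      rw [h0, zero_smul]
  have hGpos : ∀ x, 0 < G x := by
    intro x
    obtain ⟨T, K, hTK, hTne, hTpos, -, -, hGx, -⟩ := hpoint x
    rw [hGx]
    exact Finset.sum_pos hTpos hTne
  refine ⟨g, (hGcont.inv₀ (fun x => (hGpos x).ne')).smul hNvcont, ?_⟩
  intro x
  obtain ⟨T, K, hTK, hTne, hTpos, hxA, hcardT, hGx, hNx⟩ := hpoint x
  have hGp : 0 < G x := hGpos x
  have hWdata : ∀ i ∈ T, Metric.ball (y i) (5 * r i) ⊆ U ∧ dist (f x) (y i) < r i ∧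
      8 * r i < ε x := fun i hi => hWprop i x (hAW i (hxA i hi))
  have hfw : ∀ i ∈ T, ‖f x - w i‖ < 2 * r i := by
    intro i hi
    obtain ⟨-, hd, -⟩ := hWdata i hi
    have hw' : dist (w i) (y i) < r i := Metric.mem_ball.1 (hwball i)
    calc ‖f x - w i‖ = dist (f x) (w i) := (dist_eq_norm _ _).symm
      _ ≤ dist (f x) (y i) + dist (y i) (w i) := dist_triangle _ _ _
      _ < r i + r i := by rw [dist_comm (y i)]; linarith
      _ = 2 * r i := by ring
  have hgx : g x = (G x)⁻¹ • ∑ i ∈ T, gf i x • w i := by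
    show (G x)⁻¹ • Nv x = _
    rw [hNx]
  have hdiff : f x - g x = (G x)⁻¹ • ∑ i ∈ T, gf i x • (f x - w i) := by
    have hsplit : ∑ i ∈ T, gf i x • (f x - w i)
        = (∑ i ∈ T, gf i x) • f x - ∑ i ∈ T, gf i x • w i := by
      rw [Finset.sum_smul]
      rw [← Finset.sum_sub_distrib]
      exact Finset.sum_congr rfl fun i _ => smul_sub _ _ _
    rw [hgx, hsplit, ← hGx, smul_sub, smul_smul, inv_mul_cancel₀ hGp.ne', one_smul]
  have hbound : ∀ c : ℝ, (∀ i ∈ T, 2 * r i ≤ c) → ‖f x - g x‖ ≤ c := by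
    intro c hc
    rw [hdiff, norm_smul, Real.norm_eq_abs, abs_of_nonneg (inv_nonneg.2 hGp.le)]
    have h1 : ‖∑ i ∈ T, gf i x • (f x - w i)‖ ≤ ∑ i ∈ T, gf i x * c := by
      refine le_trans (norm_sum_le _ _) (Finset.sum_le_sum ?_)
      intro i hi
      rw [norm_smul, Real.norm_eq_abs, abs_of_nonneg (hgnn i x)]
      exact mul_le_mul_of_nonneg_left (le_trans (hfw i hi).le (hc i hi)) (hgnn i x)
    calc (G x)⁻¹ * ‖∑ i ∈ T, gf i x • (f x - w i)‖
        ≤ (G x)⁻¹ * ∑ i ∈ T, gf i x * c :=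
          mul_le_mul_of_nonneg_left h1 (inv_nonneg.2 hGp.le)
      _ = (G x)⁻¹ * (G x * c) := by rw [← Finset.sum_mul, ← hGx]
      _ = c := by field_simp
  refine ⟨?_, ?_, ?_⟩
  · obtain ⟨i0, hi0T, hi0max⟩ := Finset.exists_max_image T r hTne
    refine (hWdata i0 hi0T).1 ?_
    rw [Metric.mem_ball]
    have h1 : ‖f x - g x‖ ≤ 2 * r i0 := hbound (2 * r i0)
      (fun i hi => by have := hi0max i hi; linarith)
    have h2 := (hWdata i0 hi0T).2.1
    have h3 : dist (g x) (f x) = ‖f x - g x‖ := by rw [dist_comm, dist_eq_norm]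
    calc dist (g x) (y i0) ≤ dist (g x) (f x) + dist (f x) (y i0) := dist_triangle _ _ _
      _ ≤ 2 * r i0 + r i0 := by rw [h3]; linarith
      _ < 5 * r i0 := by have := hrpos i0; linarith
  · have hb : ‖f x - g x‖ ≤ ε x / 4 := hbound (ε x / 4)
      (fun i hi => by have := (hWdata i hi).2.2; linarith)
    have := hεpos x
    linarith
  · intro hgS
    have hgSM : g x ∈ lastZeroSubmodule p q := by
      rw [hS] at hgS
      exact hgS
    have hsum : (∑ j ∈ T, ((G x)⁻¹ * gf j x) • w j) ∈ lastZeroSubmodule p q := by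
      have heq : ∑ j ∈ T, ((G x)⁻¹ * gf j x) • w j = g x := by
        rw [hgx, Finset.smul_sum]
        exact Finset.sum_congr rfl fun i _ => (smul_smul _ _ _).symm
      rw [heq]
      exact hgSM
    have hzero := hkey K T hTK hcardT _ hsum
    obtain ⟨i0, hi0⟩ := hTne
    have h1 := hzero i0 hi0
    have h2 : 0 < (G x)⁻¹ * gf i0 x := mul_pos (inv_pos.2 hGp) (hTpos i0 hi0)
    rw [h1] at h2
    exact lt_irrefl 0 h2
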